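/- For the bipartite component case of Theorem 1: let U induce a connected bipartite subgraph of G with partite sets A, B, τ ≡ 1 on U, and every vertex of N_G(U) has threshold equal to its degree in G. Define A' = N_G(B)\N_G[A], B' = N_G(A)\N_G[B], C = N_G(A)∩N_G(B). If X_t ∩ (A∪A'∪C) = ∅ for some t in the activation process, then X_{t+1} ∩ (B∪B'∪C) = ∅ and X_{t+2} ∩ (A∪A'∪C) = ∅; hence X_{t+2k} ∩ (A∪A'∪C) = ∅ for all k ≥ 0. -/

import Mathlib

open Finset

/-- The non-monotone activation process on `(G, τ)` starting with `X`:
`X_t = {u : |N_G(u) ∩ X_{t-1}| ≥ τ(u)}` for `t ≥ 1`. -/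
def activation {V : Type*} (G : SimpleGraph V) [Fintype V] [DecidableEq V]
    [DecidableRel G.Adj] (τ : V → ℤ) (X : Finset V) : ℕ → Finset V
  | 0 => X
  | t + 1 => Finset.univ.filter
      (fun u => τ u ≤ ((G.neighborFinset u ∩ activation G τ X t).card : ℤ))

/-- `X` is a non-monotone target set for `(G, τ)`. -/
def IsTargetSet {V : Type*} (G : SimpleGraph V) [Fintype V] [DecidableEq V]
    [DecidableRel G.Adj] (τ : V → ℤ) (X : Finset V) : Prop :=
  ∃ t₀ : ℕ, ∀ t ≥ t₀, activation G τ X t = Finset.univ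

/-- Open neighbourhood of a set of vertices: `N_G(S)`. -/
def openNbhd {V : Type*} (G : SimpleGraph V) (S : Set V) : Set V :=
  {v | v ∉ S ∧ ∃ u ∈ S, G.Adj u v}

/-- Closed neighbourhood of a set of vertices: `N_G[S]`. -/
def closedNbhd {V : Type*} (G : SimpleGraph V) (S : Set V) : Set V :=
  S ∪ openNbhd G S

/-- Closed neighbourhood, as a finset. -/
def closedNbhdFinset {V : Type*} (G : SimpleGraph V) [Fintype V] [DecidableEq V]
    [DecidableRel G.Adj] (U : Finset V) : Finset V :=
  U ∪ Finset.univ.filter (fun v => ∃ u ∈ U, G.Adj u v)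

/-- `U` is the vertex set of a connected component of the subgraph of `G` induced by `S`. -/
def IsComponentOf {V : Type*} (G : SimpleGraph V) (S U : Set V) : Prop :=
  U ⊆ S ∧ U.Nonempty ∧ (G.induce U).Connected ∧
    ∀ u ∈ U, ∀ v ∈ S, G.Adj u v → v ∈ U

/-- The subgraph of `G` induced by `S`, as a graph on the subtype `S`. -/
def restrict {V : Type*} (G : SimpleGraph V) (S : Set V) : SimpleGraph S where
  Adj a b := G.Adj a b
  symm := ⟨fun _ _ h => h.symm⟩
  loopless := ⟨fun _ h => h.ne rfl⟩

instance {V : Type*} (G : SimpleGraph V) (S : Set V) [h : DecidableRel G.Adj] :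
    DecidableRel (restrict G S).Adj := fun a b => inferInstanceAs (Decidable (G.Adj a b))


lemma step_lemma {V : Type*} [Fintype V] [DecidableEq V] (G : SimpleGraph V)
    [DecidableRel G.Adj] (τ : V → ℤ) (X₀ : Finset V) (A B : Set V)
    (hB : ∀ b ∈ B, ∀ b' ∈ B, ¬ G.Adj b b')
    (hone : ∀ u ∈ A ∪ B, τ u = 1)
    (hN : ∀ w ∈ openNbhd G (A ∪ B), τ w = (G.degree w : ℤ))
    (t : ℕ)
    (hempty : ∀ x ∈ activation G τ X₀ t,
      x ∉ A ∪ (openNbhd G B \ closedNbhd G A) ∪ (openNbhd G A ∩ openNbhd G B)) :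
    ∀ x ∈ activation G τ X₀ (t + 1),
      x ∉ B ∪ (openNbhd G A \ closedNbhd G B) ∪ (openNbhd G A ∩ openNbhd G B) := by
  intro x hx hmem
  rw [show t + 1 = t + 1 from rfl, activation, Finset.mem_filter] at hx
  obtain ⟨-, hτ⟩ := hx
  have hxNA : x ∈ openNbhd G A ∧ x ∉ B → False := by
    rintro ⟨⟨hxnA, a, haA, hax⟩, hxnB⟩
    -- x is outside U with threshold = degree
    have hxU : x ∈ openNbhd G (A ∪ B) := by
      refine ⟨?_, a, Or.inl haA, hax⟩
      rintro (h | h) <;> [exact hxnA h; exact hxnB h]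
    have hτx : τ x = (G.degree x : ℤ) := hN x hxU
    rw [hτx] at hτ
    have hle : (G.neighborFinset x ∩ activation G τ X₀ t).card ≤ G.degree x :=
      le_trans (Finset.card_le_card Finset.inter_subset_left) (le_of_eq (G.card_neighborFinset_eq_degree x))
    have hge : G.degree x ≤ (G.neighborFinset x ∩ activation G τ X₀ t).card := by
      exact_mod_cast hτ
    have heq : G.neighborFinset x ∩ activation G τ X₀ t = G.neighborFinset x := by
      apply Finset.eq_of_subset_of_card_le Finset.inter_subset_left
      rw [G.card_neighborFinset_eq_degree x]
      exact hge
    have haX : a ∈ activation G τ X₀ t := by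
      have : a ∈ G.neighborFinset x ∩ activation G τ X₀ t := by
        rw [heq, SimpleGraph.mem_neighborFinset]
        exact hax.symm
      exact (Finset.mem_inter.mp this).2
    exact hempty a haX (Or.inl (Or.inl haA))
  rcases hmem with (hxB | hxD) | hxC
  · -- x ∈ B: threshold 1, so it has an active neighbour y
    have hτx : τ x = 1 := hone x (Or.inr hxB)
    rw [hτx] at hτ
    have hpos : 0 < (G.neighborFinset x ∩ activation G τ X₀ t).card := by
      exact_mod_cast lt_of_lt_of_le zero_lt_one hτ
    obtain ⟨y, hy⟩ := Finset.card_pos.mp hpos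
    obtain ⟨hyN, hyX⟩ := Finset.mem_inter.mp hy
    have hxy : G.Adj x y := (SimpleGraph.mem_neighborFinset _ _ _).mp hyN
    by_cases hyA : y ∈ A
    · exact hempty y hyX (Or.inl (Or.inl hyA))
    by_cases hyB : y ∈ B
    · exact hB x hxB y hyB hxy
    have hyNB : y ∈ openNbhd G B := ⟨hyB, x, hxB, hxy⟩
    by_cases hyNA : y ∈ openNbhd G A
    · exact hempty y hyX (Or.inr ⟨hyNA, hyNB⟩)
    · exact hempty y hyX (Or.inl (Or.inr ⟨hyNB, fun h => h.elim hyA hyNA⟩))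
  · exact hxNA ⟨hxD.1, fun h => hxD.2 (Or.inl h)⟩
  · exact hxNA ⟨hxC.1, hxC.2.1⟩

theorem stmt_19 {V : Type*} [Fintype V] [DecidableEq V] (G : SimpleGraph V)
    [DecidableRel G.Adj] (τ : V → ℤ) (X₀ : Finset V) (U A B : Set V)
    (hUAB : U = A ∪ B) (hdisj : Disjoint A B)
    (hA : ∀ a ∈ A, ∀ a' ∈ A, ¬ G.Adj a a')
    (hB : ∀ b ∈ B, ∀ b' ∈ B, ¬ G.Adj b b')
    (hone : ∀ u ∈ U, τ u = 1)
    (hconn : (restrict G U).Connected)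
    (hN : ∀ w ∈ openNbhd G U, τ w = (G.degree w : ℤ))
    (t : ℕ)
    (hempty : ∀ x ∈ activation G τ X₀ t,
      x ∉ A ∪ (openNbhd G B \ closedNbhd G A) ∪ (openNbhd G A ∩ openNbhd G B)) :
    (∀ x ∈ activation G τ X₀ (t + 1),
      x ∉ B ∪ (openNbhd G A \ closedNbhd G B) ∪ (openNbhd G A ∩ openNbhd G B)) ∧
    (∀ x ∈ activation G τ X₀ (t + 2),
      x ∉ A ∪ (openNbhd G B \ closedNbhd G A) ∪ (openNbhd G A ∩ openNbhd G B)) ∧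
    (∀ k : ℕ, ∀ x ∈ activation G τ X₀ (t + 2 * k),
      x ∉ A ∪ (openNbhd G B \ closedNbhd G A) ∪ (openNbhd G A ∩ openNbhd G B)) := by
  subst hUAB
  have step1 : ∀ s : ℕ, (∀ x ∈ activation G τ X₀ s,
      x ∉ A ∪ (openNbhd G B \ closedNbhd G A) ∪ (openNbhd G A ∩ openNbhd G B)) →
      ∀ x ∈ activation G τ X₀ (s + 1),
      x ∉ B ∪ (openNbhd G A \ closedNbhd G B) ∪ (openNbhd G A ∩ openNbhd G B) :=
    fun s h => step_lemma G τ X₀ A B hB hone hN s h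
  have step2 : ∀ s : ℕ, (∀ x ∈ activation G τ X₀ s,
      x ∉ B ∪ (openNbhd G A \ closedNbhd G B) ∪ (openNbhd G A ∩ openNbhd G B)) →
      ∀ x ∈ activation G τ X₀ (s + 1),
      x ∉ A ∪ (openNbhd G B \ closedNbhd G A) ∪ (openNbhd G A ∩ openNbhd G B) := by
    intro s h
    have := step_lemma G τ X₀ B A hA
      (by rwa [Set.union_comm]) (by rwa [Set.union_comm]) s
      (by rwa [Set.inter_comm] at h)
    rwa [Set.inter_comm (openNbhd G B)] at this
  refine ⟨step1 t hempty, step2 (t+1) (step1 t hempty), ?_⟩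
  intro k
  induction k with
  | zero => simpa using hempty
  | succ n ih =>
    have h1 := step1 _ ih
    have h2 := step2 _ h1
    have : t + 2 * (n + 1) = t + 2 * n + 1 + 1 := by ring
    rw [this]
    exact h2
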